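/- Duality preserves containment of caps and zones: let u₁, u₂ ∈ S^d and r₁, r₂ ∈ (0, π/2). If the cap {x : ⟨x, u₁⟩ ≥ cos r₁} is contained in the cap {x : ⟨x, u₂⟩ ≥ cos r₂}, then the zone {x : |⟨x, u₁⟩| ≤ sin r₁} is contained in the zone {x : |⟨x, u₂⟩| ≤ sin r₂}. -/

import Mathlib

open Real RealInnerProductSpace

lemma alg_ineq (C1 S1 C2 S2 c s a b : ℝ)
    (hC1 : 0 < C1) (hS1 : 0 < S1) (hC2 : 0 < C2) (hS2 : 0 < S2)
    (h1 : C1^2 + S1^2 = 1) (h2 : C2^2 + S2^2 = 1)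
    (hc : C2 ≤ c) (hs : 0 ≤ s) (hcs : c^2 + s^2 ≤ 1)
    (ha : 0 ≤ a) (haS : a ≤ S1) (hb : 0 ≤ b) (hab : a^2 + b^2 = 1)
    (hK : C2 ≤ c*C1 - s*S1) : c*a + s*b ≤ S2 := by
  have hbC1 : C1 ≤ b := by nlinarith
  have hM : c*S1 + s*C1 ≤ S2 := by nlinarith [sq_nonneg (c*S1 + s*C1), sq_nonneg (c*C1 - s*S1 - C2), mul_nonneg (mul_nonneg (le_trans hC2.le hc) hS1.le) (mul_nonneg hs hC1.le)]
  have hbr : 0 ≤ c*(b+C1) - s*(S1+a) := by nlinarith [mul_le_mul_of_nonneg_left hbC1 (le_trans hC2.le hc), mul_le_mul_of_nonneg_left haS hs]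
  have hkey : 0 ≤ (S1 - a) * (c*(b+C1) - s*(S1+a)) := mul_nonneg (by linarith) hbr
  have hlast : c*a + s*b ≤ c*S1 + s*C1 := by
    have hpos : 0 < b + C1 := by linarith
    nlinarith [hkey]
  linarith

set_option maxHeartbeats 1000000 in
lemma lt_one_of_sq_lt_one (x : ℝ) (h0 : 0 ≤ x) (h : x^2 < 1) : x < 1 := by nlinarith

lemma sq_le_of_le (x y : ℝ) (h0 : 0 ≤ x) (h : x ≤ y) : x^2 ≤ y^2 := by nlinarith

theorem duality_preserves_containment
    (d : ℕ) (u₁ u₂ : EuclideanSpace ℝ (Fin (d + 1)))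
    (hu₁ : ‖u₁‖ = 1) (hu₂ : ‖u₂‖ = 1)
    (r₁ r₂ : ℝ) (hr₁ : 0 < r₁ ∧ r₁ < π / 2) (hr₂ : 0 < r₂ ∧ r₂ < π / 2)
    (hcap : ∀ x : EuclideanSpace ℝ (Fin (d + 1)), ‖x‖ = 1 →
      Real.cos r₁ ≤ ⟪x, u₁⟫ → Real.cos r₂ ≤ ⟪x, u₂⟫) :
    ∀ x : EuclideanSpace ℝ (Fin (d + 1)), ‖x‖ = 1 →
      |⟪x, u₁⟫| ≤ Real.sin r₁ → |⟪x, u₂⟫| ≤ Real.sin r₂ := by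
  obtain ⟨hr₁0, hr₁2⟩ := hr₁
  obtain ⟨hr₂0, hr₂2⟩ := hr₂
  have hC1 : 0 < Real.cos r₁ := Real.cos_pos_of_mem_Ioo ⟨by linarith [Real.pi_pos], hr₁2⟩
  have hS1 : 0 < Real.sin r₁ := Real.sin_pos_of_pos_of_lt_pi hr₁0 (by linarith [Real.pi_pos])
  have hC2 : 0 < Real.cos r₂ := Real.cos_pos_of_mem_Ioo ⟨by linarith [Real.pi_pos], hr₂2⟩
  have hS2 : 0 < Real.sin r₂ := Real.sin_pos_of_pos_of_lt_pi hr₂0 (by linarith [Real.pi_pos])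
  have h1 : Real.cos r₁ ^ 2 + Real.sin r₁ ^ 2 = 1 := by rw [add_comm]; exact Real.sin_sq_add_cos_sq r₁
  have h2 : Real.cos r₂ ^ 2 + Real.sin r₂ ^ 2 = 1 := by rw [add_comm]; exact Real.sin_sq_add_cos_sq r₂
  intro x hx hxz
  set c : ℝ := ⟪u₁, u₂⟫ with hc_def
  have hu₁u₁ : ⟪u₁, u₁⟫ = 1 := by
    rw [real_inner_self_eq_norm_sq, hu₁]; norm_num
  have hxx : ⟪x, x⟫ = 1 := by
    rw [real_inner_self_eq_norm_sq, hx]; norm_num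
  have hu₂u₂ : ⟪u₂, u₂⟫ = 1 := by
    rw [real_inner_self_eq_norm_sq, hu₂]; norm_num
  have hc : Real.cos r₂ ≤ c := hcap u₁ hu₁ (by rw [hu₁u₁]; exact Real.cos_le_one r₁)
  set t : ℝ := ⟪x, u₁⟫ with ht_def
  have hxu₁ : ⟪u₁, x⟫ = t := by rw [real_inner_comm]
  set v : EuclideanSpace ℝ (Fin (d+1)) := u₂ - c • u₁ with hv_def
  set y : EuclideanSpace ℝ (Fin (d+1)) := x - t • u₁ with hy_def
  have hu₁v : ⟪u₁, v⟫ = 0 := by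
    rw [hv_def, inner_sub_right, real_inner_smul_right, hu₁u₁, ← hc_def]; ring
  have hu₁y : ⟪u₁, y⟫ = 0 := by
    rw [hy_def, inner_sub_right, real_inner_smul_right, hu₁u₁, hxu₁]; ring
  have hyu₁ : ⟪y, u₁⟫ = 0 := by rw [real_inner_comm]; exact hu₁y
  have hvv : ⟪v, v⟫ = 1 - c^2 := by
    rw [hv_def, inner_sub_left, inner_sub_right, inner_sub_right, real_inner_smul_left,
      real_inner_smul_left, real_inner_smul_right, real_inner_smul_right,
      hu₁u₁, hu₂u₂]
    have hcomm : ⟪u₂, u₁⟫ = c := by rw [real_inner_comm]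
    rw [hcomm]; ring
  have hyy : ⟪y, y⟫ = 1 - t^2 := by
    rw [hy_def, inner_sub_left, inner_sub_right, inner_sub_right, real_inner_smul_left,
      real_inner_smul_left, real_inner_smul_right, real_inner_smul_right,
      hxx, hu₁u₁, hxu₁, ← ht_def]
    ring
  have hsin1 : Real.sin r₁ < 1 :=
    lt_one_of_sq_lt_one _ hS1.le (by nlinarith [hC1, hS1, h1])
  have ht1 : t^2 < 1 := by
    have h1' : |t| < 1 := lt_of_le_of_lt hxz hsin1
    calc t^2 = |t|^2 := (sq_abs t).symm
    _ < 1 := by nlinarith [abs_nonneg t]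
  set b : ℝ := Real.sqrt (1 - t^2) with hb_def
  have hb0 : 0 < b := Real.sqrt_pos.mpr (by linarith)
  have hb2 : b^2 = 1 - t^2 := Real.sq_sqrt (by linarith)
  set ε : ℝ := if 0 ≤ ⟪y, v⟫ then -1 else 1 with hε_def
  have hεyv : ε * ⟪y, v⟫ = -|⟪y, v⟫| := by
    rw [hε_def]; split <;> rename_i h
    · rw [abs_of_nonneg h]; ring
    · rw [abs_of_neg (not_le.mp h)]; ring
  have hε2 : ε^2 = 1 := by rw [hε_def]; split <;> norm_num
  set q : ℝ := (Real.sin r₁ * ε) / b with hq_def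
  have hqt : q^2 * (1 - t^2) = Real.sin r₁ ^ 2 := by
    rw [hq_def, div_pow, mul_pow, hε2, mul_one, hb2,
      div_mul_cancel₀ _ (ne_of_gt (by linarith : (0:ℝ) < 1 - t^2))]
  set z : EuclideanSpace ℝ (Fin (d+1)) := Real.cos r₁ • u₁ + q • y with hz_def
  have hzu₁ : ⟪z, u₁⟫ = Real.cos r₁ := by
    rw [hz_def, inner_add_left, real_inner_smul_left, real_inner_smul_left, hu₁u₁, hyu₁]
    ring
  have hzz : ‖z‖ = 1 := by
    have hz2 : ⟪z, z⟫ = 1 := by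
      rw [hz_def, inner_add_left, inner_add_right, inner_add_right, real_inner_smul_left,
        real_inner_smul_left, real_inner_smul_left, real_inner_smul_left,
        real_inner_smul_right, real_inner_smul_right, real_inner_smul_right,
        real_inner_smul_right, hu₁u₁, hu₁y, hyu₁, hyy]
      linear_combination h1 + hqt
    have h' : ‖z‖^2 = 1 := by rw [← real_inner_self_eq_norm_sq]; exact hz2
    rw [← Real.sqrt_sq (norm_nonneg z), h', Real.sqrt_one]
  have hyu₂ : ⟪y, u₂⟫ = ⟪y, v⟫ := by
    rw [hv_def, inner_sub_right, real_inner_smul_right, hyu₁]; ring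
  have hzu₂ : ⟪z, u₂⟫ = c * Real.cos r₁ - (|⟪y, v⟫| / b) * Real.sin r₁ := by
    rw [hz_def, inner_add_left, real_inner_smul_left, real_inner_smul_left, hyu₂, ← hc_def, hq_def]
    linear_combination (Real.sin r₁ / b) * hεyv
  have hK : Real.cos r₂ ≤ c * Real.cos r₁ - (|⟪y, v⟫| / b) * Real.sin r₁ := by
    rw [← hzu₂]; exact hcap z hzz (le_of_eq hzu₁.symm)
  set s : ℝ := |⟪y, v⟫| / b with hs_def
  have hs0 : 0 ≤ s := div_nonneg (abs_nonneg _) hb0.le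
  have hsb : s * b = |⟪y, v⟫| := by rw [hs_def, div_mul_cancel₀ _ hb0.ne']
  have hcs : c^2 + s^2 ≤ 1 := by
    have hCS := abs_real_inner_le_norm y v
    have hnv : ‖v‖^2 = 1 - c^2 := by rw [← hvv, real_inner_self_eq_norm_sq]
    have hny : ‖y‖^2 = 1 - t^2 := by rw [← hyy, real_inner_self_eq_norm_sq]
    have hnyb : ‖y‖ = b := by
      rw [hb_def]
      rw [show (1 : ℝ) - t^2 = ‖y‖^2 from hny.symm]
      exact (Real.sqrt_sq (norm_nonneg y)).symm
    rw [hnyb] at hCS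
    have hsv : s ≤ ‖v‖ := by
      rw [hs_def, div_le_iff₀ hb0]
      calc |⟪y, v⟫| ≤ b * ‖v‖ := hCS
      _ = ‖v‖ * b := by ring
    have := sq_le_of_le s ‖v‖ hs0 hsv
    linarith [hnv ▸ this]
  have hxu₂ : ⟪x, u₂⟫ = c * t + ⟪y, v⟫ := by
    have hxv : ⟪x, v⟫ = ⟪y, v⟫ := by
      rw [hy_def, inner_sub_left, real_inner_smul_left, hu₁v]; ring
    have hstep : ⟪x, u₂⟫ = c * t + ⟪x, v⟫ := by
      rw [hv_def, inner_sub_right, real_inner_smul_right, ← ht_def]; ring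
    rw [hstep, hxv]
  have habs : |⟪x, u₂⟫| ≤ c * |t| + s * b := by
    rw [hxu₂, hsb]
    have h1' : |c * t + ⟪y, v⟫| ≤ |c * t| + |⟪y, v⟫| := abs_add_le _ _
    have h2' : |c * t| = c * |t| := by
      rw [abs_mul, abs_of_nonneg (le_trans hC2.le hc)]
    linarith
  have hfin : c * |t| + s * b ≤ Real.sin r₂ :=
    alg_ineq (Real.cos r₁) (Real.sin r₁) (Real.cos r₂) (Real.sin r₂) c s |t| b
      hC1 hS1 hC2 hS2 h1 h2 hc hs0 hcs (abs_nonneg t) hxz hb0.le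
      (by rw [sq_abs]; linarith) hK
  linarith
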